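/- Let 𝔄 be the L-structure with domain A = ℕ × {0,1,2}, where L has two unary relation symbols U₀, U₁ and two binary relation symbols N, R, interpreted by: U₀ = ℕ×{0}, U₁ = ℕ×{1}, N = {(u,v) ∈ (ℕ×{1})² ∪ (ℕ×{2})² : u ≠ v}, and R = {((n,0),(n,1)) : n ∈ ℕ} ∪ {((n,0),(n,2)) : n ∈ ℕ} ∪ {((0,0),(n,1)) : n ∈ ℕ} ∪ {((0,0),(n,2)) : n ∈ ℕ}. Then the complete first-order theory of 𝔄 is totally categorical: for every infinite cardinal κ, any two models of Th(𝔄) of cardinality κ are isomorphic. -/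

import Mathlib

open FirstOrder FirstOrder.Language

universe w

/-- The domain `ℕ × {0,1,2}`. -/
abbrev SpiderDom : Type := ℕ × Fin 3

/-- The relation `N`: pairs of distinct elements both in `ℕ×{1}` or both in `ℕ×{2}`. -/
def SpiderN (u v : SpiderDom) : Prop :=
  ((u.2 = 1 ∧ v.2 = 1) ∨ (u.2 = 2 ∧ v.2 = 2)) ∧ u ≠ v

/-- The relation `R`. -/
def SpiderR (u v : SpiderDom) : Prop :=
  (u.2 = 0 ∧ v.2 = 1 ∧ u.1 = v.1) ∨ (u.2 = 0 ∧ v.2 = 2 ∧ u.1 = v.1) ∨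
    (u = ((0 : ℕ), (0 : Fin 3)) ∧ v.2 = 1) ∨ (u = ((0 : ℕ), (0 : Fin 3)) ∧ v.2 = 2)

/-- The relation symbols: two unary symbols (`U₀`, `U₁`) and two binary symbols (`N`, `R`). -/
def SpiderRels : ℕ → Type
  | 1 => Fin 2
  | 2 => Fin 2
  | _ => Empty

/-- The language with two unary relation symbols `U₀`, `U₁` and two binary relation
symbols `N`, `R`. -/
def SpiderLang : FirstOrder.Language := ⟨fun _ => Empty, SpiderRels⟩

/-- Interpretation of the unary relation symbols `U₀`, `U₁`. -/
def spiderUnary (r : Fin 2) (v : Fin 1 → SpiderDom) : Prop :=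
  if r = 0 then (v 0).2 = 0 else (v 0).2 = 1

/-- Interpretation of the binary relation symbols `N`, `R`. -/
def spiderBinary (r : Fin 2) (v : Fin 2 → SpiderDom) : Prop :=
  if r = 0 then SpiderN (v 0) (v 1) else SpiderR (v 0) (v 1)

/-- The interpretation of the relation symbols on `SpiderDom`. -/
def spiderRelInterp : ∀ n, SpiderRels n → (Fin n → SpiderDom) → Prop
  | 0, r, _ => r.elim
  | 1, r, v => spiderUnary r v
  | 2, r, v => spiderBinary r v
  | (_ + 3), r, _ => r.elim

/-- The structure 𝔄. -/
instance : SpiderLang.Structure SpiderDom where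
  funMap := fun f _ => f.elim
  RelMap := fun {n} r v => spiderRelInterp n r v

namespace Spider

/-! ### Relation symbols -/

def symU0 : SpiderLang.Relations 1 := (0 : Fin 2)
def symU1 : SpiderLang.Relations 1 := (1 : Fin 2)
def symN : SpiderLang.Relations 2 := (0 : Fin 2)
def symR : SpiderLang.Relations 2 := (1 : Fin 2)

section Sem

variable {X : Type*} [SpiderLang.Structure X]

def u0 (x : X) : Prop := Structure.RelMap symU0 ![x]
def u1 (x : X) : Prop := Structure.RelMap symU1 ![x]
def p2 (x : X) : Prop := ¬ u0 x ∧ ¬ u1 x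
def nr (x y : X) : Prop := Structure.RelMap symN ![x, y]
def rr (x y : X) : Prop := Structure.RelMap symR ![x, y]

/-- `pt true` is part 1 and `pt false` is part 2. -/
def pt (b : Bool) (x : X) : Prop := if b then u1 x else p2 x

def isHub (a : X) : Prop := u0 a ∧ ∀ y : X, ¬ u0 y → rr a y

lemma u0_dom (x : SpiderDom) : u0 x ↔ x.2 = 0 := Iff.rfl
lemma u1_dom (x : SpiderDom) : u1 x ↔ x.2 = 1 := Iff.rfl
lemma nr_dom (x y : SpiderDom) : nr x y ↔ SpiderN x y := Iff.rfl
lemma rr_dom (x y : SpiderDom) : rr x y ↔ SpiderR x y := Iff.rfl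

end Sem

end Spider
namespace Spider

/-! ### Sentences -/

def fU0 {n} (t : SpiderLang.Term (Empty ⊕ Fin n)) : SpiderLang.BoundedFormula Empty n :=
  Relations.boundedFormula₁ symU0 t
def fU1 {n} (t : SpiderLang.Term (Empty ⊕ Fin n)) : SpiderLang.BoundedFormula Empty n :=
  Relations.boundedFormula₁ symU1 t
def fP2 {n} (t : SpiderLang.Term (Empty ⊕ Fin n)) : SpiderLang.BoundedFormula Empty n :=
  ∼(fU0 t) ⊓ ∼(fU1 t)
def fPt {n} (b : Bool) (t : SpiderLang.Term (Empty ⊕ Fin n)) : SpiderLang.BoundedFormula Empty n :=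
  if b then fU1 t else fP2 t
def fN {n} (t₁ t₂ : SpiderLang.Term (Empty ⊕ Fin n)) : SpiderLang.BoundedFormula Empty n :=
  Relations.boundedFormula₂ symN t₁ t₂
def fR {n} (t₁ t₂ : SpiderLang.Term (Empty ⊕ Fin n)) : SpiderLang.BoundedFormula Empty n :=
  Relations.boundedFormula₂ symR t₁ t₂

def σdisj : SpiderLang.Sentence := ∀' ∼(fU0 &0 ⊓ fU1 &0)

def σnchar : SpiderLang.Sentence :=
  ∀' ∀' (fN &0 &1 ⇔ (((fU1 &0 ⊓ fU1 &1) ⊔ (fP2 &0 ⊓ fP2 &1)) ⊓ ∼(&0 =' &1)))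

def σrdom : SpiderLang.Sentence := ∀' ∀' (fR &0 &1 ⟹ (fU0 &0 ⊓ ∼(fU0 &1)))

def σhub_ex : SpiderLang.Sentence := ∃' (fU0 &0 ⊓ ∀' (∼(fU0 &1) ⟹ fR &0 &1))

def σhub_uniq : SpiderLang.Sentence :=
  ∀' ∀' ((fU0 &0 ⊓ ∀' (∼(fU0 &2) ⟹ fR &0 &2)) ⟹
    (fU0 &1 ⊓ ∀' (∼(fU0 &2) ⟹ fR &1 &2)) ⟹ &0 =' &1)

def σf_ex (b : Bool) : SpiderLang.Sentence :=
  ∀' ∀' ((fU0 &0 ⊓ ∀' (∼(fU0 &2) ⟹ fR &0 &2)) ⟹ fU0 &1 ⟹ ∼(&1 =' &0) ⟹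
    ∃' (fPt b &2 ⊓ fR &1 &2))

def σf_uniq (b : Bool) : SpiderLang.Sentence :=
  ∀' ∀' ∀' ∀' ((fU0 &0 ⊓ ∀' (∼(fU0 &4) ⟹ fR &0 &4)) ⟹ fU0 &1 ⟹ ∼(&1 =' &0) ⟹
    fPt b &2 ⟹ fPt b &3 ⟹ fR &1 &2 ⟹ fR &1 &3 ⟹ &2 =' &3)

def σf_inj (b : Bool) : SpiderLang.Sentence :=
  ∀' ∀' ∀' ∀' ((fU0 &0 ⊓ ∀' (∼(fU0 &4) ⟹ fR &0 &4)) ⟹ fU0 &1 ⟹ fU0 &2 ⟹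
    ∼(&1 =' &0) ⟹ ∼(&2 =' &0) ⟹ fPt b &3 ⟹ fR &1 &3 ⟹ fR &2 &3 ⟹ &1 =' &2)

def σb_ex (b : Bool) : SpiderLang.Sentence :=
  ∀' ((fU0 &0 ⊓ ∀' (∼(fU0 &1) ⟹ fR &0 &1)) ⟹
    ∃' (fPt b &1 ⊓ ∀' (fU0 &2 ⟹ ∼(&2 =' &0) ⟹ ∼(fR &2 &1))))

def σb_uniq (b : Bool) : SpiderLang.Sentence :=
  ∀' ∀' ∀' ((fU0 &0 ⊓ ∀' (∼(fU0 &3) ⟹ fR &0 &3)) ⟹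
    fPt b &1 ⟹ (∀' (fU0 &3 ⟹ ∼(&3 =' &0) ⟹ ∼(fR &3 &1))) ⟹
    fPt b &2 ⟹ (∀' (fU0 &3 ⟹ ∼(&3 =' &0) ⟹ ∼(fR &3 &2))) ⟹ &1 =' &2)

/-! ### Realization lemmas -/

section Realize

section FinVals
@[local simp] lemma val_1_2 : ((1 : Fin 2) : ℕ) = 1 := rfl
@[local simp] lemma val_1_3 : ((1 : Fin 3) : ℕ) = 1 := rfl
@[local simp] lemma val_2_3 : ((2 : Fin 3) : ℕ) = 2 := rfl
@[local simp] lemma val_1_4 : ((1 : Fin 4) : ℕ) = 1 := rfl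
@[local simp] lemma val_2_4 : ((2 : Fin 4) : ℕ) = 2 := rfl
@[local simp] lemma val_3_4 : ((3 : Fin 4) : ℕ) = 3 := rfl
@[local simp] lemma val_1_5 : ((1 : Fin 5) : ℕ) = 1 := rfl
@[local simp] lemma val_2_5 : ((2 : Fin 5) : ℕ) = 2 := rfl
@[local simp] lemma val_3_5 : ((3 : Fin 5) : ℕ) = 3 := rfl
@[local simp] lemma val_4_5 : ((4 : Fin 5) : ℕ) = 4 := rfl

variable (X : Type*) [SpiderLang.Structure X]

attribute [local simp] σdisj σnchar σrdom σhub_ex σhub_uniq σf_ex σf_uniq σf_inj σb_ex σb_uniq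
  fU0 fU1 fP2 fPt fN fR u0 u1 p2 nr rr pt isHub Sentence.Realize Formula.Realize Fin.snoc

lemma realize_disj : X ⊨ σdisj ↔ ∀ x : X, ¬ (u0 x ∧ u1 x) := by simp

lemma realize_nchar :
    X ⊨ σnchar ↔ ∀ x y : X, nr x y ↔ ((u1 x ∧ u1 y) ∨ (p2 x ∧ p2 y)) ∧ x ≠ y := by simp

lemma realize_rdom : X ⊨ σrdom ↔ ∀ x y : X, rr x y → u0 x ∧ ¬ u0 y := by simp

lemma realize_hub_ex : X ⊨ σhub_ex ↔ ∃ a : X, isHub a := by simp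

lemma realize_hub_uniq : X ⊨ σhub_uniq ↔ ∀ a a' : X, isHub a → isHub a' → a = a' := by simp

lemma realize_f_ex (b : Bool) : X ⊨ σf_ex b ↔
    ∀ a x : X, isHub a → u0 x → x ≠ a → ∃ y, pt b y ∧ rr x y := by
  cases b <;> simp

lemma realize_f_uniq (b : Bool) : X ⊨ σf_uniq b ↔
    ∀ a x y y' : X, isHub a → u0 x → x ≠ a → pt b y → pt b y' → rr x y → rr x y' → y = y' := by
  cases b <;> simp

lemma realize_f_inj (b : Bool) : X ⊨ σf_inj b ↔
    ∀ a x x' y : X, isHub a → u0 x → u0 x' → x ≠ a → x' ≠ a → pt b y →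
      rr x y → rr x' y → x = x' := by
  cases b <;> simp

lemma realize_b_ex (b : Bool) : X ⊨ σb_ex b ↔
    ∀ a : X, isHub a → ∃ y, pt b y ∧ ∀ x, u0 x → x ≠ a → ¬ rr x y := by
  cases b <;> simp

lemma realize_b_uniq (b : Bool) : X ⊨ σb_uniq b ↔
    ∀ a y y' : X, isHub a → pt b y → (∀ x, u0 x → x ≠ a → ¬ rr x y) →
      pt b y' → (∀ x, u0 x → x ≠ a → ¬ rr x y') → y = y' := by
  cases b <;> simp

end FinVals

end Realize

end Spider
namespace Spider

/-- The semantic content of the theory of the spider structure. -/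
structure IsSpider (X : Type*) [SpiderLang.Structure X] : Prop where
  disj : ∀ x : X, ¬ (u0 x ∧ u1 x)
  nchar : ∀ x y : X, nr x y ↔ ((u1 x ∧ u1 y) ∨ (p2 x ∧ p2 y)) ∧ x ≠ y
  rdom : ∀ x y : X, rr x y → u0 x ∧ ¬ u0 y
  hub_ex : ∃ a : X, isHub a
  hub_uniq : ∀ a a' : X, isHub a → isHub a' → a = a'
  f_ex : ∀ (b : Bool) (a x : X), isHub a → u0 x → x ≠ a → ∃ y, pt b y ∧ rr x y
  f_uniq : ∀ (b : Bool) (a x y y' : X), isHub a → u0 x → x ≠ a → pt b y → pt b y' →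
    rr x y → rr x y' → y = y'
  f_inj : ∀ (b : Bool) (a x x' y : X), isHub a → u0 x → u0 x' → x ≠ a → x' ≠ a → pt b y →
    rr x y → rr x' y → x = x'
  b_ex : ∀ (b : Bool) (a : X), isHub a → ∃ y, pt b y ∧ ∀ x, u0 x → x ≠ a → ¬ rr x y
  b_uniq : ∀ (b : Bool) (a y y' : X), isHub a → pt b y → (∀ x, u0 x → x ≠ a → ¬ rr x y) →
    pt b y' → (∀ x, u0 x → x ≠ a → ¬ rr x y') → y = y'

section Dom

lemma p2_dom (x : SpiderDom) : p2 x ↔ x.2 = 2 := by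
  simp only [p2, u0_dom, u1_dom]
  omega

lemma pt_dom (b : Bool) (x : SpiderDom) : pt b x ↔ x.2 = (if b then 1 else 2) := by
  cases b <;> simp [pt, p2_dom, u1_dom]

lemma isHub_dom (a : SpiderDom) : isHub a ↔ a = ((0 : ℕ), (0 : Fin 3)) := by
  constructor
  · rintro ⟨h0, hall⟩
    rw [u0_dom] at h0
    by_contra hne
    have h1 := hall ((0 : ℕ), (1 : Fin 3)) (by rw [u0_dom]; simp)
    have h2 := hall ((1 : ℕ), (1 : Fin 3)) (by rw [u0_dom]; simp)
    rw [rr_dom] at h1 h2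
    unfold SpiderR at h1 h2
    simp_all
    try omega
  · rintro rfl
    refine ⟨by rw [u0_dom], fun y hy => ?_⟩
    rw [u0_dom] at hy
    rw [rr_dom]
    unfold SpiderR
    have : y.2 = 1 ∨ y.2 = 2 := by omega
    rcases this with h | h
    · exact Or.inr (Or.inr (Or.inl ⟨rfl, h⟩))
    · exact Or.inr (Or.inr (Or.inr ⟨rfl, h⟩))

lemma isSpider_dom : IsSpider SpiderDom := by
  constructor
  · intro x hx
    rw [u0_dom, u1_dom] at hx
    omega
  · intro x y
    rw [nr_dom, u1_dom, u1_dom, p2_dom, p2_dom]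
    exact Iff.rfl
  · intro x y hxy
    rw [rr_dom] at hxy
    rw [u0_dom, u0_dom]
    unfold SpiderR at hxy
    rcases hxy with ⟨h, h', _⟩ | ⟨h, h', _⟩ | ⟨rfl, h'⟩ | ⟨rfl, h'⟩ <;> simp_all <;> try omega
  · exact ⟨((0:ℕ), (0:Fin 3)), (isHub_dom _).2 rfl⟩
  · intro a a' ha ha'
    rw [isHub_dom] at ha ha'
    rw [ha, ha']
  · -- f_ex
    intro b a x ha hx hxa
    rw [isHub_dom] at ha
    subst ha
    rw [u0_dom] at hx
    refine ⟨(x.1, if b then 1 else 2), ?_, ?_⟩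
    · rw [pt_dom]
    · rw [rr_dom]
      unfold SpiderR
      cases b <;> simp <;> exact Or.inl hx
  · -- f_uniq
    intro b a x y y' ha hx hxa hy hy' hr hr'
    rw [isHub_dom] at ha; subst ha
    rw [u0_dom] at hx
    rw [pt_dom] at hy hy'
    rw [rr_dom] at hr hr'
    unfold SpiderR at hr hr'
    have hxne : x.1 ≠ 0 ∨ x.2 ≠ 0 := by
      by_contra hcon
      push_neg at hcon
      exact hxa (Prod.ext hcon.1 hcon.2)
    have hy1 : y.1 = x.1 := by
      rcases hr with ⟨_, _, h⟩ | ⟨_, _, h⟩ | ⟨hh, _⟩ | ⟨hh, _⟩ <;>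
        first
          | exact h.symm
          | (exfalso; cases b <;> simp_all)
    have hy'1 : y'.1 = x.1 := by
      rcases hr' with ⟨_, _, h⟩ | ⟨_, _, h⟩ | ⟨hh, _⟩ | ⟨hh, _⟩ <;>
        first
          | exact h.symm
          | (exfalso; cases b <;> simp_all)
    exact Prod.ext (hy1.trans hy'1.symm) (hy.trans hy'.symm)
  · -- f_inj
    intro b a x x' y ha hx hx' hxa hx'a hy hr hr'
    rw [isHub_dom] at ha; subst ha
    rw [u0_dom] at hx hx'
    rw [pt_dom] at hy
    rw [rr_dom] at hr hr'
    unfold SpiderR at hr hr'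
    have hx1 : x.1 = y.1 := by
      rcases hr with ⟨_, _, h⟩ | ⟨_, _, h⟩ | ⟨hh, _⟩ | ⟨hh, _⟩ <;>
        first
          | exact h
          | (exfalso; exact hxa hh)
    have hx'1 : x'.1 = y.1 := by
      rcases hr' with ⟨_, _, h⟩ | ⟨_, _, h⟩ | ⟨hh, _⟩ | ⟨hh, _⟩ <;>
        first
          | exact h
          | (exfalso; exact hx'a hh)
    exact Prod.ext (hx1.trans hx'1.symm) (hx.trans hx'.symm)
  · -- b_ex
    intro b a ha
    rw [isHub_dom] at ha; subst ha
    refine ⟨((0:ℕ), if b then 1 else 2), (pt_dom _ _).2 rfl, ?_⟩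
    intro x hx hxa hr
    rw [u0_dom] at hx
    rw [rr_dom] at hr
    unfold SpiderR at hr
    rcases hr with ⟨_, _, h⟩ | ⟨_, _, h⟩ | ⟨hh, _⟩ | ⟨hh, _⟩ <;>
      first
        | exact hxa (Prod.ext (by simp_all) hx)
        | exact hxa hh
  · -- b_uniq
    intro b a y y' ha hy huy hy' huy' 
    rw [isHub_dom] at ha; subst ha
    rw [pt_dom] at hy hy'
    have hz : ∀ z : SpiderDom, z.2 = (if b then 1 else 2) →
        (∀ x, u0 x → x ≠ ((0:ℕ), (0:Fin 3)) → ¬ rr x z) → z.1 = 0 := by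
      intro z hz2 hun
      by_contra hzne
      refine hun (z.1, 0) ((u0_dom _).2 rfl) ?_ ?_
      · intro hc
        exact hzne (congrArg Prod.fst hc)
      · rw [rr_dom]
        unfold SpiderR
        cases b
        · simp_all
        · simp_all
    exact Prod.ext ((hz y hy huy).trans (hz y' hy' huy').symm) (hy.trans hy'.symm)

end Dom

/-- Any model of the complete theory of the spider structure is a spider. -/
lemma isSpider_of_model (M : Type*) [SpiderLang.Structure M]
    [hM : M ⊨ SpiderLang.completeTheory SpiderDom] : IsSpider M := by
  have tr : ∀ φ : SpiderLang.Sentence, SpiderDom ⊨ φ → M ⊨ φ := fun φ h =>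
    (realize_iff_of_model_completeTheory SpiderDom M φ).2 h
  have hd := isSpider_dom
  constructor
  · exact (realize_disj M).1 (tr _ ((realize_disj SpiderDom).2 hd.disj))
  · exact (realize_nchar M).1 (tr _ ((realize_nchar SpiderDom).2 hd.nchar))
  · exact (realize_rdom M).1 (tr _ ((realize_rdom SpiderDom).2 hd.rdom))
  · exact (realize_hub_ex M).1 (tr _ ((realize_hub_ex SpiderDom).2 hd.hub_ex))
  · exact (realize_hub_uniq M).1 (tr _ ((realize_hub_uniq SpiderDom).2 hd.hub_uniq))
  · exact fun b => (realize_f_ex M b).1 (tr _ ((realize_f_ex SpiderDom b).2 (hd.f_ex b)))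
  · exact fun b => (realize_f_uniq M b).1 (tr _ ((realize_f_uniq SpiderDom b).2 (hd.f_uniq b)))
  · exact fun b => (realize_f_inj M b).1 (tr _ ((realize_f_inj SpiderDom b).2 (hd.f_inj b)))
  · exact fun b => (realize_b_ex M b).1 (tr _ ((realize_b_ex SpiderDom b).2 (hd.b_ex b)))
  · exact fun b => (realize_b_uniq M b).1 (tr _ ((realize_b_uniq SpiderDom b).2 (hd.b_uniq b)))

end Spider
namespace Spider

section Canon

variable {X : Type*} [SpiderLang.Structure X]

/-- The non-hub elements of part 0. -/
abbrev T0 (X : Type*) [SpiderLang.Structure X] : Type _ := {x : X // u0 x ∧ ¬ isHub x}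

variable (h : IsSpider X)

noncomputable def hub : X := h.hub_ex.choose

lemma hub_isHub : isHub (hub h) := h.hub_ex.choose_spec

lemma eq_hub_of_isHub {a : X} (ha : isHub a) : a = hub h := h.hub_uniq _ _ ha (hub_isHub h)

lemma T0_ne_hub (t : T0 X) : (t : X) ≠ hub h := fun hc => t.2.2 (by rw [hc]; exact hub_isHub h)

noncomputable def bpt (b : Bool) : X := (h.b_ex b (hub h) (hub_isHub h)).choose

lemma bpt_pt (b : Bool) : pt b (bpt h b) := (h.b_ex b (hub h) (hub_isHub h)).choose_spec.1

lemma bpt_unhit (b : Bool) : ∀ x, u0 x → x ≠ hub h → ¬ rr x (bpt h b) :=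
  (h.b_ex b (hub h) (hub_isHub h)).choose_spec.2

noncomputable def fm (b : Bool) (t : T0 X) : X :=
  (h.f_ex b (hub h) t (hub_isHub h) t.2.1 (T0_ne_hub h t)).choose

lemma fm_pt (b : Bool) (t : T0 X) : pt b (fm h b t) :=
  (h.f_ex b (hub h) t (hub_isHub h) t.2.1 (T0_ne_hub h t)).choose_spec.1

lemma fm_rr (b : Bool) (t : T0 X) : rr (t : X) (fm h b t) :=
  (h.f_ex b (hub h) t (hub_isHub h) t.2.1 (T0_ne_hub h t)).choose_spec.2

lemma pt_not_u0 {x : X} {b : Bool} (h : IsSpider X) (hp : pt b x) : ¬ u0 x := by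
  cases b
  · exact hp.1
  · exact fun hu => h.disj x ⟨hu, hp⟩

lemma pt_u1_iff {x : X} (b : Bool) (hp : pt b x) : u1 x ↔ b = true := by
  cases b
  · simpa using hp.2
  · simpa [pt] using hp

/-- The canonical parametrization of a spider. -/
noncomputable def canon : Fin 3 × Option (T0 X) → X := fun p =>
  ![fun o => o.elim (hub h) Subtype.val,
    fun o => o.elim (bpt h true) (fm h true),
    fun o => o.elim (bpt h false) (fm h false)] p.1 p.2

lemma canon_0n : canon h ((0 : Fin 3), none) = hub h := rfl
lemma canon_0s (t : T0 X) : canon h ((0 : Fin 3), some t) = t := rfl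
lemma canon_1n : canon h ((1 : Fin 3), none) = bpt h true := rfl
lemma canon_1s (t : T0 X) : canon h ((1 : Fin 3), some t) = fm h true t := rfl
lemma canon_2n : canon h ((2 : Fin 3), none) = bpt h false := rfl
lemma canon_2s (t : T0 X) : canon h ((2 : Fin 3), some t) = fm h false t := rfl

lemma u0_canon (p : Fin 3 × Option (T0 X)) : u0 (canon h p) ↔ p.1 = 0 := by
  obtain ⟨i, o⟩ := p
  fin_cases i <;> cases o <;>
    simp only [canon_0n, canon_0s, canon_1n, canon_1s, canon_2n, canon_2s] <;>
    simp only [show ((⟨0, by omega⟩ : Fin 3) = 0) = True by simp,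
      show ((⟨1, by omega⟩ : Fin 3) = 0) = False by simp [Fin.ext_iff],
      show ((⟨2, by omega⟩ : Fin 3) = 0) = False by simp [Fin.ext_iff], iff_true, iff_false]
  · exact (hub_isHub h).1
  · rename_i t; exact t.2.1
  · exact pt_not_u0 h (bpt_pt h true)
  · rename_i t; exact pt_not_u0 h (fm_pt h true t)
  · exact pt_not_u0 h (bpt_pt h false)
  · rename_i t; exact pt_not_u0 h (fm_pt h false t)

lemma u1_canon (p : Fin 3 × Option (T0 X)) : u1 (canon h p) ↔ p.1 = 1 := by
  obtain ⟨i, o⟩ := p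
  fin_cases i <;> cases o <;>
    simp only [canon_0n, canon_0s, canon_1n, canon_1s, canon_2n, canon_2s] <;>
    simp only [show ((⟨0, by omega⟩ : Fin 3) = 1) = False by simp [Fin.ext_iff],
      show ((⟨1, by omega⟩ : Fin 3) = 1) = True by simp [Fin.ext_iff],
      show ((⟨2, by omega⟩ : Fin 3) = 1) = False by simp [Fin.ext_iff], iff_true, iff_false]
  · exact fun hu => h.disj _ ⟨(hub_isHub h).1, hu⟩
  · rename_i t; exact fun hu => h.disj _ ⟨t.2.1, hu⟩
  · exact (pt_u1_iff true (bpt_pt h true)).2 rfl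
  · rename_i t; exact (pt_u1_iff true (fm_pt h true t)).2 rfl
  · exact fun hu => by simpa using (pt_u1_iff false (bpt_pt h false)).1 hu
  · rename_i t; exact fun hu => by simpa using (pt_u1_iff false (fm_pt h false t)).1 hu

lemma p2_canon (p : Fin 3 × Option (T0 X)) : p2 (canon h p) ↔ p.1 = 2 := by
  have tri : ∀ i : Fin 3, i = 0 ∨ i = 1 ∨ i = 2 := by decide
  constructor
  · intro hp
    rcases tri p.1 with h0 | h1 | h2
    · exact absurd ((u0_canon h p).2 h0) hp.1
    · exact absurd ((u1_canon h p).2 h1) hp.2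
    · exact h2
  · intro h2
    constructor
    · intro hu; rw [u0_canon h p] at hu; rw [hu] at h2; exact absurd h2 (by decide)
    · intro hu; rw [u1_canon h p] at hu; rw [hu] at h2; exact absurd h2 (by decide)

lemma pt_canon (b : Bool) (p : Fin 3 × Option (T0 X)) :
    pt b (canon h p) ↔ p.1 = (if b then 1 else 2) := by
  cases b
  · exact p2_canon h p
  · exact u1_canon h p

lemma fm_ne_bpt (b : Bool) (t : T0 X) : fm h b t ≠ bpt h b := fun hc =>
  bpt_unhit h b t t.2.1 (T0_ne_hub h t) (hc ▸ fm_rr h b t)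

lemma fm_inj {b : Bool} {t s : T0 X} (hc : fm h b t = fm h b s) : t = s := by
  refine Subtype.ext (h.f_inj b (hub h) t s (fm h b s) (hub_isHub h) t.2.1 s.2.1
    (T0_ne_hub h t) (T0_ne_hub h s) (fm_pt h b s) ?_ (fm_rr h b s))
  rw [← hc]; exact fm_rr h b t

lemma canon_inj : Function.Injective (canon h) := by
  have tri : ∀ i : Fin 3, i = 0 ∨ i = 1 ∨ i = 2 := by decide
  intro p q hpq
  have h0 : (p.1 = 0) ↔ (q.1 = 0) := by rw [← u0_canon h p, ← u0_canon h q, hpq]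
  have h1 : (p.1 = 1) ↔ (q.1 = 1) := by rw [← u1_canon h p, ← u1_canon h q, hpq]
  have h2 : (p.1 = 2) ↔ (q.1 = 2) := by rw [← p2_canon h p, ← p2_canon h q, hpq]
  have hfst : p.1 = q.1 := by
    rcases tri p.1 with hh | hh | hh <;> rw [hh]
    · exact (h0.1 hh).symm
    · exact (h1.1 hh).symm
    · exact (h2.1 hh).symm
  obtain ⟨i, o⟩ := p
  obtain ⟨j, u⟩ := q
  simp only at hfst
  subst hfst
  simp only [Prod.mk.injEq, true_and]
  fin_cases i <;> cases o <;> cases u <;>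
      simp only [canon_0n, canon_0s, canon_1n, canon_1s, canon_2n, canon_2s] at hpq <;>
      first
        | rfl
        | exact absurd hpq.symm (T0_ne_hub h _)
        | exact absurd hpq (T0_ne_hub h _)
        | exact absurd hpq (fm_ne_bpt h _ _)
        | exact absurd hpq.symm (fm_ne_bpt h _ _)
        | exact congrArg some (Subtype.ext hpq)
        | exact congrArg some (fm_inj h hpq)

lemma rr_hub_iff (y : X) : rr (hub h) y ↔ ¬ u0 y :=
  ⟨fun hr => (h.rdom _ _ hr).2, (hub_isHub h).2 y⟩

lemma rr_t_iff (t : T0 X) (y : X) : rr (t : X) y ↔ (y = fm h true t ∨ y = fm h false t) := by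
  constructor
  · intro hr
    have hd := h.rdom _ _ hr
    by_cases hu1 : u1 y
    · exact Or.inl (h.f_uniq true (hub h) t y (fm h true t) (hub_isHub h) t.2.1
        (T0_ne_hub h t) hu1 (fm_pt h true t) hr (fm_rr h true t))
    · exact Or.inr (h.f_uniq false (hub h) t y (fm h false t) (hub_isHub h) t.2.1
        (T0_ne_hub h t) ⟨hd.2, hu1⟩ (fm_pt h false t) hr (fm_rr h false t))
  · rintro (rfl | rfl)
    · exact fm_rr h true t
    · exact fm_rr h false t

lemma canon_surj : Function.Surjective (canon h) := by
  intro x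
  by_cases hu0 : u0 x
  · by_cases hh : isHub x
    · exact ⟨((0 : Fin 3), none), (eq_hub_of_isHub h hh).symm⟩
    · exact ⟨((0 : Fin 3), some ⟨x, hu0, hh⟩), rfl⟩
  · have hne : ∀ x' : X, u0 x' → x' ≠ hub h → ¬ isHub x' := by
      intro x' _ hx' hc
      exact hx' (eq_hub_of_isHub h hc)
    by_cases hu1 : u1 x
    · by_cases hhit : ∃ t : T0 X, rr (t : X) x
      · obtain ⟨t, ht⟩ := hhit
        refine ⟨((1 : Fin 3), some t), ?_⟩
        rw [canon_1s]
        exact (h.f_uniq true (hub h) t (fm h true t) x (hub_isHub h) t.2.1 (T0_ne_hub h t)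
          (fm_pt h true t) hu1 (fm_rr h true t) ht)
      · refine ⟨((1 : Fin 3), none), ?_⟩
        rw [canon_1n]
        push_neg at hhit
        exact h.b_uniq true (hub h) (bpt h true) x (hub_isHub h) (bpt_pt h true)
          (bpt_unhit h true) hu1 (fun x' hx'0 hx'h => hhit ⟨x', hx'0, hne x' hx'0 hx'h⟩)
    · by_cases hhit : ∃ t : T0 X, rr (t : X) x
      · obtain ⟨t, ht⟩ := hhit
        refine ⟨((2 : Fin 3), some t), ?_⟩
        rw [canon_2s]
        exact (h.f_uniq false (hub h) t (fm h false t) x (hub_isHub h) t.2.1 (T0_ne_hub h t)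
          (fm_pt h false t) ⟨hu0, hu1⟩ (fm_rr h false t) ht)
      · refine ⟨((2 : Fin 3), none), ?_⟩
        rw [canon_2n]
        push_neg at hhit
        exact (h.b_uniq false (hub h) (bpt h false) x (hub_isHub h) (bpt_pt h false)
          (bpt_unhit h false) ⟨hu0, hu1⟩ (fun x' hx'0 hx'h => hhit ⟨x', hx'0, hne x' hx'0 hx'h⟩))

end Canon

end Spider
namespace Spider

section Canon2

variable {X : Type*} [SpiderLang.Structure X] (h : IsSpider X)

lemma rr_canon (p q : Fin 3 × Option (T0 X)) :
    rr (canon h p) (canon h q) ↔ p.1 = 0 ∧ q.1 ≠ 0 ∧ (p.2 = none ∨ p.2 = q.2) := by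
  have tri : ∀ i : Fin 3, i = 0 ∨ i = 1 ∨ i = 2 := by decide
  constructor
  · intro hr
    have hd := h.rdom _ _ hr
    have hp0 : p.1 = 0 := (u0_canon h p).1 hd.1
    have hq0 : q.1 ≠ 0 := fun hc => hd.2 ((u0_canon h q).2 hc)
    refine ⟨hp0, hq0, ?_⟩
    obtain ⟨i, o⟩ := p
    have hi : i = 0 := hp0
    subst hi
    cases o with
    | none => exact Or.inl rfl
    | some t =>
      right
      rw [canon_0s] at hr
      rcases (rr_t_iff h t _).1 hr with hc | hc
      · have hq : q = ((1 : Fin 3), some t) := canon_inj h (by rw [canon_1s]; exact hc)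
        rw [hq]
      · have hq : q = ((2 : Fin 3), some t) := canon_inj h (by rw [canon_2s]; exact hc)
        rw [hq]
  · rintro ⟨hp0, hq0, hor⟩
    have hq' : ¬ u0 (canon h q) := fun hu => hq0 ((u0_canon h q).1 hu)
    obtain ⟨i, o⟩ := p
    have hi : i = 0 := hp0
    subst hi
    rcases hor with hnone | heq
    · have ho : o = none := hnone
      subst ho
      rw [canon_0n]
      exact (rr_hub_iff h _).2 hq'
    · cases o with
      | none =>
        rw [canon_0n]
        exact (rr_hub_iff h _).2 hq'
      | some t =>
        rw [canon_0s]
        obtain ⟨j, u⟩ := q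
        have hu : u = some t := (Eq.symm heq)
        subst hu
        rcases tri j with hj | hj | hj
        · exact absurd hj hq0
        · subst hj; rw [canon_1s]; exact fm_rr h true t
        · subst hj; rw [canon_2s]; exact fm_rr h false t

lemma nr_canon (p q : Fin 3 × Option (T0 X)) :
    nr (canon h p) (canon h q) ↔
      (((p.1 = 1 ∧ q.1 = 1) ∨ (p.1 = 2 ∧ q.1 = 2)) ∧ p ≠ q) := by
  rw [h.nchar]
  simp only [u1_canon h, p2_canon h, ne_eq, (canon_inj h).eq_iff]

include h in
lemma mk_T0 (hX : Cardinal.aleph0 ≤ Cardinal.mk X) :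
    Cardinal.mk (T0 X) = Cardinal.mk X := by
  have he : Cardinal.mk X = 3 * (Cardinal.mk (T0 X) + 1) := by
    rw [← Cardinal.mk_congr (Equiv.ofBijective (canon h) ⟨canon_inj h, canon_surj h⟩)]
    simp [Cardinal.mk_prod, Cardinal.mk_option, Cardinal.mk_fintype]
  set t := Cardinal.mk (T0 X) with ht
  have h3 : (3 : Cardinal) < Cardinal.aleph0 := by
    exact_mod_cast Cardinal.nat_lt_aleph0 3
  have htinf : Cardinal.aleph0 ≤ t := by
    by_contra hlt
    push_neg at hlt
    have : Cardinal.mk X < Cardinal.aleph0 := by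
      rw [he]
      exact Cardinal.mul_lt_aleph0 h3 (Cardinal.add_lt_aleph0 hlt Cardinal.one_lt_aleph0)
    exact absurd hX (not_le.2 this)
  rw [he, Cardinal.add_one_eq htinf,
    Cardinal.mul_eq_right htinf (le_of_lt (lt_of_lt_of_le h3 htinf)) (by norm_num)]

lemma rel1_iff (r : Fin 2) (v : Fin 1 → X) :
    Structure.RelMap (show SpiderLang.Relations 1 from r) v ↔
      (if r = 0 then u0 (v 0) else u1 (v 0)) := by
  have hv : ![v 0] = v := by funext i; fin_cases i; rfl
  rcases r with ⟨rv, hr⟩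
  interval_cases rv
  · rw [if_pos (show (⟨0, hr⟩ : Fin 2) = 0 from rfl)]
    exact iff_of_eq (congrArg (fun w => Structure.RelMap (M := X) symU0 w) hv.symm)
  · rw [if_neg (show ¬(⟨1, hr⟩ : Fin 2) = 0 from fun hc => one_ne_zero (congrArg Fin.val hc))]
    exact iff_of_eq (congrArg (fun w => Structure.RelMap (M := X) symU1 w) hv.symm)

lemma rel2_iff (r : Fin 2) (v : Fin 2 → X) :
    Structure.RelMap (show SpiderLang.Relations 2 from r) v ↔
      (if r = 0 then nr (v 0) (v 1) else rr (v 0) (v 1)) := by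
  have hv : ![v 0, v 1] = v := by funext i; fin_cases i <;> rfl
  rcases r with ⟨rv, hr⟩
  interval_cases rv
  · rw [if_pos (show (⟨0, hr⟩ : Fin 2) = 0 from rfl)]
    exact iff_of_eq (congrArg (fun w => Structure.RelMap (M := X) symN w) hv.symm)
  · rw [if_neg (show ¬(⟨1, hr⟩ : Fin 2) = 0 from fun hc => one_ne_zero (congrArg Fin.val hc))]
    exact iff_of_eq (congrArg (fun w => Structure.RelMap (M := X) symR w) hv.symm)

end Canon2

end Spider
/-- The first-order theory of 𝔄 is totally categorical: for every infinite cardinal κ, any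
two models of `Th(𝔄)` of cardinality κ are isomorphic. -/
theorem spider_totally_categorical (κ : Cardinal.{w}) (hκ : Cardinal.aleph0 ≤ κ)
    (M N : Type w) [SpiderLang.Structure M] [SpiderLang.Structure N]
    [M ⊨ SpiderLang.completeTheory SpiderDom] [N ⊨ SpiderLang.completeTheory SpiderDom]
    (hM : Cardinal.mk M = κ) (hN : Cardinal.mk N = κ) :
    Nonempty (M ≃[SpiderLang] N) := by
  classical
  have hMs := Spider.isSpider_of_model M
  have hNs := Spider.isSpider_of_model N
  have hTM : Cardinal.mk (Spider.T0 M) = κ := by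
    rw [Spider.mk_T0 hMs (by rw [hM]; exact hκ), hM]
  have hTN : Cardinal.mk (Spider.T0 N) = κ := by
    rw [Spider.mk_T0 hNs (by rw [hN]; exact hκ), hN]
  obtain ⟨e⟩ := Cardinal.eq.1 (hTM.trans hTN.symm)
  let cM : (Fin 3 × Option (Spider.T0 M)) ≃ M :=
    Equiv.ofBijective _ ⟨Spider.canon_inj hMs, Spider.canon_surj hMs⟩
  let cN : (Fin 3 × Option (Spider.T0 N)) ≃ N :=
    Equiv.ofBijective _ ⟨Spider.canon_inj hNs, Spider.canon_surj hNs⟩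
  let pe : (Fin 3 × Option (Spider.T0 M)) ≃ (Fin 3 × Option (Spider.T0 N)) :=
    Equiv.prodCongr (Equiv.refl _) (Equiv.optionCongr e)
  let g : M ≃ N := (cM.symm.trans pe).trans cN
  have hgx : ∀ x : M, g x = Spider.canon hNs (pe (cM.symm x)) := fun x => rfl
  have hx : ∀ x : M, Spider.canon hMs (cM.symm x) = x := fun x => cM.apply_symm_apply x
  have hpe1 : ∀ p, (pe p).1 = p.1 := fun p => rfl
  have hpe2 : ∀ p, (pe p).2 = Option.map e p.2 := fun p => rfl
  have gu0 : ∀ x : M, Spider.u0 (g x) ↔ Spider.u0 x := by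
    intro x
    conv_rhs => rw [← hx x]
    rw [hgx x, Spider.u0_canon hNs, Spider.u0_canon hMs, hpe1]
  have gu1 : ∀ x : M, Spider.u1 (g x) ↔ Spider.u1 x := by
    intro x
    conv_rhs => rw [← hx x]
    rw [hgx x, Spider.u1_canon hNs, Spider.u1_canon hMs, hpe1]
  have gnr : ∀ x y : M, Spider.nr (g x) (g y) ↔ Spider.nr x y := by
    intro x y
    conv_rhs => rw [← hx x, ← hx y]
    rw [hgx x, hgx y, Spider.nr_canon hNs, Spider.nr_canon hMs, hpe1, hpe1,
      pe.injective.ne_iff]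
  have grr : ∀ x y : M, Spider.rr (g x) (g y) ↔ Spider.rr x y := by
    intro x y
    conv_rhs => rw [← hx x, ← hx y]
    rw [hgx x, hgx y, Spider.rr_canon hNs, Spider.rr_canon hMs, hpe1, hpe1, hpe2, hpe2]
    simp only [Option.map_eq_none_iff, (Option.map_injective e.injective).eq_iff]
  refine ⟨⟨g, ?_, ?_⟩⟩
  · intro n f
    exact Empty.elim f
  · intro n r v
    match n, r, v with
    | 0, r, v => exact Empty.elim r
    | 1, r, v =>
      refine (Spider.rel1_iff r (g ∘ v)).trans (Iff.trans ?_ (Spider.rel1_iff r v).symm)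
      by_cases hr : (show Fin 2 from r) = 0
      · rw [if_pos hr, if_pos hr]
        exact gu0 (v 0)
      · rw [if_neg hr, if_neg hr]
        exact gu1 (v 0)
    | 2, r, v =>
      refine (Spider.rel2_iff r (g ∘ v)).trans (Iff.trans ?_ (Spider.rel2_iff r v).symm)
      by_cases hr : (show Fin 2 from r) = 0
      · rw [if_pos hr, if_pos hr]
        exact gnr (v 0) (v 1)
      · rw [if_neg hr, if_neg hr]
        exact grr (v 0) (v 1)
    | (n + 3), r, v => exact Empty.elim r
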